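/- For the map F on [0,11.5]² defined piecewise by F(p) = (1,0) if p₁+p₂ ≥ 20 and p₁ ≤ p₂; (0,1) if p₁+p₂ ≥ 20 and p₁ > p₂; (11.5,11) if p₁+p₂ < 20 and p₁ ≤ p₂; (11,11.5) if p₁+p₂ < 20 and p₁ > p₂, the point p* = (10,10) is the unique fixed point of the averaged iteration limit: specifically, the sequence p_{t+1} = (1/(t+1))·F(p_t) + (1 − 1/(t+1))·p_t with p₀ = (0,0) converges to (10,10). -/
import Mathlib

/-- The piecewise-constant expected-closing-price map of Example 1. -/
noncomputable def exF (p : ℝ × ℝ) : ℝ × ℝ :=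
  if 20 ≤ p.1 + p.2 then
    (if p.1 ≤ p.2 then (1, 0) else (0, 1))
  else
    (if p.1 ≤ p.2 then (11.5, 11) else (11, 11.5))

/-- The averaged price-prediction iteration `p₀ = (0,0)`,
`p_{t+1} = (1/(t+1))·F(p_t) + (1 − 1/(t+1))·p_t`. -/
noncomputable def exSeq : ℕ → ℝ × ℝ
  | 0 => (0, 0)
  | t + 1 => (1 / ((t : ℝ) + 1)) • exF (exSeq t) + (1 - 1 / ((t : ℝ) + 1)) • exSeq t

lemma exSeq_succ_fst (t : ℕ) : (exSeq (t+1)).1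
    = (1/((t:ℝ)+1)) * (exF (exSeq t)).1 + (1 - 1/((t:ℝ)+1)) * (exSeq t).1 := by
  simp [exSeq, smul_eq_mul]

lemma exSeq_succ_snd (t : ℕ) : (exSeq (t+1)).2
    = (1/((t:ℝ)+1)) * (exF (exSeq t)).2 + (1 - 1/((t:ℝ)+1)) * (exSeq t).2 := by
  simp [exSeq, smul_eq_mul]

lemma key : ∀ t : ℕ,
    |(exSeq (t+1)).1 + (exSeq (t+1)).2 - 20| * ((t:ℝ)+1) ≤ 19 ∧
    |(exSeq (t+1)).1 - (exSeq (t+1)).2| * ((t:ℝ)+1) ≤ 1 := by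
  intro t
  induction t with
  | zero =>
      have h0 : exSeq 0 = (0, 0) := rfl
      have hF : exF (exSeq 0) = (11.5, 11) := by
        rw [h0]; simp [exF]
      have h1 : (exSeq 1).1 = 11.5 := by
        rw [exSeq_succ_fst, hF]; norm_num
      have h2 : (exSeq 1).2 = 11 := by
        rw [exSeq_succ_snd, hF]; norm_num
      rw [h1, h2]
      norm_num [abs_le]
  | succ n ih =>
      obtain ⟨h1, h2⟩ := ih
      set p := exSeq (n+1) with hp
      have hn : (0:ℝ) < (n:ℝ) + 1 := by positivity
      have hn2 : (0:ℝ) < (n:ℝ) + 1 + 1 := by positivity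
      have hs1 : (p.1 + p.2 - 20) * ((n:ℝ)+1) ≤ 19 :=
        le_trans (mul_le_mul_of_nonneg_right (le_abs_self _) hn.le) h1
      have hs2 : -19 ≤ (p.1 + p.2 - 20) * ((n:ℝ)+1) := by
        nlinarith [neg_abs_le (p.1 + p.2 - 20)]
      have hd1 : (p.1 - p.2) * ((n:ℝ)+1) ≤ 1 :=
        le_trans (mul_le_mul_of_nonneg_right (le_abs_self _) hn.le) h2
      have hd2 : -1 ≤ (p.1 - p.2) * ((n:ℝ)+1) := by
        nlinarith [neg_abs_le (p.1 - p.2)]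
      have e1 := exSeq_succ_fst (n+1)
      have e2 := exSeq_succ_snd (n+1)
      push_cast at e1 e2
      rw [← hp] at e1 e2
      have hcast : ((n+1:ℕ):ℝ) + 1 = (n:ℝ) + 1 + 1 := by push_cast; ring
      rw [hcast]
      have habs : ∀ x c : ℝ, -c ≤ x * ((n:ℝ)+1+1) → x * ((n:ℝ)+1+1) ≤ c →
          |x| * ((n:ℝ)+1+1) ≤ c := by
        intro x c ha hb
        rw [show ((n:ℝ)+1+1) = |(n:ℝ)+1+1| from (abs_of_pos hn2).symm, ← abs_mul]
        exact abs_le.mpr ⟨ha, hb⟩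
      have main : ∀ f1 f2 : ℝ, exF p = (f1, f2) →
          -19 ≤ (p.1 + p.2 - 20) * ((n:ℝ)+1) + (f1 + f2 - 20) →
          (p.1 + p.2 - 20) * ((n:ℝ)+1) + (f1 + f2 - 20) ≤ 19 →
          -1 ≤ (p.1 - p.2) * ((n:ℝ)+1) + (f1 - f2) →
          (p.1 - p.2) * ((n:ℝ)+1) + (f1 - f2) ≤ 1 →
          |(exSeq (n+1+1)).1 + (exSeq (n+1+1)).2 - 20| * ((n:ℝ)+1+1) ≤ 19 ∧
          |(exSeq (n+1+1)).1 - (exSeq (n+1+1)).2| * ((n:ℝ)+1+1) ≤ 1 := by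
        intro f1 f2 hF hb1 hb2 hb3 hb4
        rw [hF] at e1 e2
        simp only at e1 e2
        have key1 : ((exSeq (n+1+1)).1 + (exSeq (n+1+1)).2 - 20) * ((n:ℝ)+1+1)
            = (p.1 + p.2 - 20) * ((n:ℝ)+1) + (f1 + f2 - 20) := by
          rw [e1, e2]; field_simp; ring
        have key2 : ((exSeq (n+1+1)).1 - (exSeq (n+1+1)).2) * ((n:ℝ)+1+1)
            = (p.1 - p.2) * ((n:ℝ)+1) + (f1 - f2) := by
          rw [e1, e2]; field_simp; ring
        exact ⟨habs _ _ (key1 ▸ hb1) (key1 ▸ hb2),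
               habs _ _ (key2 ▸ hb3) (key2 ▸ hb4)⟩
      rcases le_or_gt 20 (p.1 + p.2) with hA | hA <;>
        rcases le_or_gt p.1 p.2 with hB | hB
      · have hX : 0 ≤ (p.1 + p.2 - 20) * ((n:ℝ)+1) :=
          mul_nonneg (by linarith) hn.le
        have hY : (p.1 - p.2) * ((n:ℝ)+1) ≤ 0 :=
          mul_nonpos_of_nonpos_of_nonneg (by linarith) hn.le
        refine main 1 0 ?_ (by linarith) (by linarith) (by linarith) (by linarith)
        simp [exF, hA, hB]
      · have hX : 0 ≤ (p.1 + p.2 - 20) * ((n:ℝ)+1) :=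
          mul_nonneg (by linarith) hn.le
        have hY : 0 ≤ (p.1 - p.2) * ((n:ℝ)+1) :=
          mul_nonneg (by linarith) hn.le
        refine main 0 1 ?_ (by linarith) (by linarith) (by linarith) (by linarith)
        simp [exF, hA, not_le.mpr hB]
      · have hX : (p.1 + p.2 - 20) * ((n:ℝ)+1) ≤ 0 :=
          mul_nonpos_of_nonpos_of_nonneg (by linarith) hn.le
        have hY : (p.1 - p.2) * ((n:ℝ)+1) ≤ 0 :=
          mul_nonpos_of_nonpos_of_nonneg (by linarith) hn.le
        refine main 11.5 11 ?_ (by norm_num; linarith) (by norm_num; linarith)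
          (by norm_num; linarith) (by norm_num; linarith)
        simp [exF, not_le.mpr hA, hB]
      · have hX : (p.1 + p.2 - 20) * ((n:ℝ)+1) ≤ 0 :=
          mul_nonpos_of_nonpos_of_nonneg (by linarith) hn.le
        have hY : 0 ≤ (p.1 - p.2) * ((n:ℝ)+1) :=
          mul_nonneg (by linarith) hn.le
        refine main 11 11.5 ?_ (by norm_num; linarith) (by norm_num; linarith)
          (by norm_num; linarith) (by norm_num; linarith)
        simp [exF, not_le.mpr hA, not_le.mpr hB]

/-- In Example 1 the averaged iteration converges to the unique fixed point `(10,10)`. -/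
theorem exSeq_tendsto : Filter.Tendsto exSeq Filter.atTop (nhds ((10 : ℝ), (10 : ℝ))) := by
  have hbound : ∀ t : ℕ, |(exSeq (t+1)).1 - 10| ≤ 20 / ((t:ℝ)+1) ∧
      |(exSeq (t+1)).2 - 10| ≤ 20 / ((t:ℝ)+1) := by
    intro t
    obtain ⟨h1, h2⟩ := key t
    have hn : (0:ℝ) < (t:ℝ) + 1 := by positivity
    have b1 : |(exSeq (t+1)).1 + (exSeq (t+1)).2 - 20| ≤ 19 / ((t:ℝ)+1) :=
      (le_div_iff₀ hn).mpr h1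
    have b2 : |(exSeq (t+1)).1 - (exSeq (t+1)).2| ≤ 1 / ((t:ℝ)+1) :=
      (le_div_iff₀ hn).mpr h2
    obtain ⟨c1, c2⟩ := abs_le.mp b1
    obtain ⟨c3, c4⟩ := abs_le.mp b2
    have hsum : (20:ℝ) / ((t:ℝ)+1) = 19 / ((t:ℝ)+1) + 1 / ((t:ℝ)+1) := by ring
    have hpos : (0:ℝ) ≤ 20 / ((t:ℝ)+1) := by positivity
    constructor <;> rw [abs_le] <;> constructor <;> linarith
  have hg : Filter.Tendsto (fun n : ℕ => (20:ℝ) / n) Filter.atTop (nhds 0) :=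
    tendsto_const_div_atTop_nhds_zero_nat 20
  have hfst : Filter.Tendsto (fun n : ℕ => (exSeq n).1 - 10) Filter.atTop (nhds 0) := by
    apply squeeze_zero_norm' _ hg
    filter_upwards [Filter.eventually_ge_atTop 1] with n hn
    obtain ⟨t, rfl⟩ : ∃ t, n = t + 1 := ⟨n - 1, by omega⟩
    have := (hbound t).1
    simpa [Real.norm_eq_abs] using this
  have hsnd : Filter.Tendsto (fun n : ℕ => (exSeq n).2 - 10) Filter.atTop (nhds 0) := by
    apply squeeze_zero_norm' _ hg
    filter_upwards [Filter.eventually_ge_atTop 1] with n hn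
    obtain ⟨t, rfl⟩ : ∃ t, n = t + 1 := ⟨n - 1, by omega⟩
    have := (hbound t).2
    simpa [Real.norm_eq_abs] using this
  have hfst' : Filter.Tendsto (fun n : ℕ => (exSeq n).1) Filter.atTop (nhds 10) := by
    have := hfst.add_const 10
    simpa using this
  have hsnd' : Filter.Tendsto (fun n : ℕ => (exSeq n).2) Filter.atTop (nhds 10) := by
    have := hsnd.add_const 10
    simpa using this
  have := hfst'.prodMk_nhds hsnd'
  simpa using this
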